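/- (Sections of null sets) Let μ, ν be finite measures on semirings in X and Y respectively, and let μ×ν be the product measure on the product semiring. If E ⊂ X×Y is a null set for μ×ν, then for almost every x ∈ X the section {y ∈ Y : (x,y) ∈ E} is a null set in Y. -/

import Mathlib

open Filter Set

/-- A semiring of sets. -/
structure IsSemiring {X : Type*} (P : Set (Set X)) : Prop where
  empty_mem : ∅ ∈ P
  inter_mem : ∀ ⦃A B : Set X⦄, A ∈ P → B ∈ P → A ∩ B ∈ P
  diff_eq : ∀ ⦃A B : Set X⦄, A ∈ P → B ∈ P →
    ∃ (n : ℕ) (C : Fin n → Set X), (∀ i, C i ∈ P) ∧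
      Pairwise (Function.onFun Disjoint C) ∧ A \ B = ⋃ i, C i

/-- A finite (real-valued, nonnegative, σ-additive) measure on a semiring. -/
structure IsPremeasure {X : Type*} (P : Set (Set X)) (m : Set X → ℝ) : Prop where
  nonneg : ∀ ⦃A : Set X⦄, A ∈ P → 0 ≤ m A
  empty : m ∅ = 0
  sigma_additive : ∀ (A : Set X) (B : ℕ → Set X), A ∈ P → (∀ n, B n ∈ P) →
    Pairwise (Function.onFun Disjoint B) → A = (⋃ n, B n) →
    HasSum (fun n => m (B n)) (m A)

/-- `N` is a null set for the measure `m` on the semiring `P`. -/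
def NullFor {X : Type*} (P : Set (Set X)) (m : Set X → ℝ) (N : Set X) : Prop :=
  ∀ ε > 0, ∃ B : ℕ → Set X, (∀ n, B n ∈ P) ∧ N ⊆ (⋃ n, B n) ∧
    ∃ L : ℝ, HasSum (fun n => m (B n)) L ∧ L < ε

/-- A property holds almost everywhere w.r.t. `(P, m)`. -/
def AEFor {X : Type*} (P : Set (Set X)) (m : Set X → ℝ) (Pr : X → Prop) : Prop :=
  NullFor P m {x | ¬ Pr x}

/-- `φ` is a step function over `P` with elementary integral `v`. -/
def StepIntP {X : Type*} (P : Set (Set X)) (m : Set X → ℝ)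
    (φ : X → ℝ) (v : ℝ) : Prop :=
  ∃ (n : ℕ) (c : Fin n → ℝ) (A : Fin n → Set X), (∀ i, A i ∈ P) ∧
    (∀ x, φ x = ∑ i, c i * (A i).indicator 1 x) ∧ v = ∑ i, c i * m (A i)

/-- `f ∈ R₁` over `(P, m)` with integral `I`: `f` is an a.e. nondecreasing
limit of step functions whose integrals tend to `I`. -/
def R1IntP {X : Type*} (P : Set (Set X)) (m : Set X → ℝ)
    (f : X → EReal) (I : EReal) : Prop :=
  ∃ (φ : ℕ → X → ℝ) (v : ℕ → ℝ), (∀ n, StepIntP P m (φ n) (v n)) ∧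
    AEFor P m (fun x => Monotone (fun n => φ n x) ∧
      Tendsto (fun n => (φ n x : EReal)) atTop (nhds (f x))) ∧
    Tendsto (fun n => (v n : EReal)) atTop (nhds I)

/-- `f ∈ R₂` over `(P, m)` with integral `J = I₁ − I₂`. -/
def R2IntP {X : Type*} (P : Set (Set X)) (m : Set X → ℝ)
    (f : X → EReal) (J : EReal) : Prop :=
  ∃ f₁ f₂ I₁ I₂, R1IntP P m f₁ I₁ ∧ R1IntP P m f₂ I₂ ∧ (I₁ ≠ ⊤ ∨ I₂ ≠ ⊤) ∧
    AEFor P m (fun x => f x = f₁ x - f₂ x) ∧ J = I₁ - I₂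

/-- The product semiring of rectangles. -/
def ProdSemiring {X Y : Type*} (P : Set (Set X)) (Q : Set (Set Y)) :
    Set (Set (X × Y)) :=
  {S | ∃ A ∈ P, ∃ B ∈ Q, S = A ×ˢ B}

namespace SecNull

open MeasureTheory
open scoped ENNReal

variable {X : Type*} {P : Set (Set X)} {μ : Set X → ℝ}

lemma isSetSemiring (hP : IsSemiring P) : IsSetSemiring P := by
  constructor
  · exact hP.empty_mem
  · exact fun s hs t ht => hP.inter_mem hs ht
  · intro s hs t ht
    obtain ⟨n, C, hC, hdis, heq⟩ := hP.diff_eq hs ht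
    classical
    refine ⟨(Finset.univ.image C).erase ∅, ?_, ?_, ?_⟩
    · intro u hu
      simp only [Finset.coe_erase, Set.mem_diff, Finset.coe_image, Set.mem_image] at hu
      obtain ⟨⟨i, _, rfl⟩, _⟩ := hu
      exact hC i
    · intro u hu v hv huv
      simp only [Finset.coe_erase, Set.mem_diff, Finset.coe_image, Set.mem_image] at hu hv
      obtain ⟨⟨i, _, rfl⟩, _⟩ := hu
      obtain ⟨⟨j, _, rfl⟩, _⟩ := hv
      have : i ≠ j := fun h => huv (by rw [h])
      exact hdis this
    · rw [heq]
      ext x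
      simp only [Set.mem_iUnion, Set.mem_sUnion, Finset.coe_erase, Set.mem_diff,
        Finset.coe_image, Set.mem_image, Finset.mem_coe, Finset.mem_univ, true_and]
      constructor
      · rintro ⟨i, hi⟩
        refine ⟨C i, ⟨⟨i, by simp⟩, ?_⟩, hi⟩
        intro h
        rw [Set.mem_singleton_iff] at h
        rw [h] at hi; exact hi
      · rintro ⟨u, ⟨⟨i, _, rfl⟩, _⟩, hx⟩
        exact ⟨i, hx⟩

/-- Finite additivity from σ-additivity. -/
lemma fin_additive (hP : IsSemiring P) (hμ : IsPremeasure P μ) {A : Set X} (hA : A ∈ P)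
    {n : ℕ} {C : Fin n → Set X} (hC : ∀ i, C i ∈ P)
    (hdis : Pairwise (Function.onFun Disjoint C))
    (heq : A = ⋃ i, C i) : μ A = ∑ i, μ (C i) := by
  classical
  set B : ℕ → Set X := fun k => if h : k < n then C ⟨k, h⟩ else ∅ with hB
  have hBP : ∀ k, B k ∈ P := by
    intro k; simp only [hB]
    split
    · exact hC _
    · exact hP.empty_mem
  have hBdis : Pairwise (Function.onFun Disjoint B) := by
    intro i j hij
    simp only [Function.onFun, hB]
    split
    · split
      · refine hdis ?_
        simp only [ne_eq, Fin.mk.injEq]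
        exact hij
      · exact disjoint_empty _
    · exact empty_disjoint _
  have hAU : A = ⋃ k, B k := by
    rw [heq]
    ext x
    simp only [Set.mem_iUnion, hB]
    constructor
    · rintro ⟨i, hi⟩
      exact ⟨i.1, by simp [i.2, hi]⟩
    · rintro ⟨k, hk⟩
      by_cases h : k < n
      · simp only [h, dif_pos] at hk
        exact ⟨⟨k, h⟩, hk⟩
      · simp [h] at hk
  have hsum := hμ.sigma_additive A B hA hBP hBdis hAU
  have hfin : HasSum (fun k => μ (B k)) (∑ k ∈ Finset.range n, μ (B k)) := by
    apply hasSum_sum_of_ne_finset_zero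
    intro k hk
    simp only [Finset.mem_range, not_lt] at hk
    simp [hB, Nat.not_lt.mpr hk, hμ.empty]
  have := hsum.unique hfin
  rw [this, ← Fin.sum_univ_eq_sum_range (fun k => μ (B k)) n]
  apply Finset.sum_congr rfl
  intro i _
  simp [hB, i.2]

/-- The `ℝ≥0∞`-valued content associated to a premeasure. -/
noncomputable def content (hP : IsSemiring P) (hμ : IsPremeasure P μ) : AddContent ℝ≥0∞ P where
  toFun := fun A => ENNReal.ofReal (μ A)
  empty' := by simp [hμ.empty]
  sUnion' := by
    classical
    intro I h_ss h_dis h_mem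
    have hl : ∀ i : Fin I.card, (I.equivFin.symm i : Set X) ∈ I := fun i => (I.equivFin.symm i).2
    have hfin := fin_additive hP hμ (A := ⋃₀ ↑I) h_mem
      (C := fun i : Fin I.card => (I.equivFin.symm i : Set X)) (fun i => h_ss (hl i)) ?_ ?_
    · show ENNReal.ofReal (μ (⋃₀ ↑I)) = ∑ u ∈ I, ENNReal.ofReal (μ u)
      rw [hfin, ENNReal.ofReal_sum_of_nonneg (fun i _ => hμ.nonneg (h_ss (hl i)))]
      rw [← Finset.sum_coe_sort I (fun u => ENNReal.ofReal (μ u))]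
      exact Equiv.sum_comp I.equivFin.symm (fun u : {x // x ∈ I} => ENNReal.ofReal (μ u.1))
    · intro i j hij
      have hne : (I.equivFin.symm i : Set X) ≠ (I.equivFin.symm j : Set X) := by
        intro h
        exact hij (I.equivFin.symm.injective (Subtype.ext h) ▸ rfl)
      exact h_dis (hl i) (hl j) hne
    · ext x
      simp only [Set.mem_sUnion, Set.mem_iUnion, Finset.mem_coe]
      constructor
      · rintro ⟨t, ht, hx⟩
        exact ⟨I.equivFin ⟨t, ht⟩, by simpa using hx⟩
      · rintro ⟨i, hx⟩
        exact ⟨_, hl i, hx⟩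

lemma content_apply (hP : IsSemiring P) (hμ : IsPremeasure P μ) (A : Set X) :
    content hP hμ A = ENNReal.ofReal (μ A) := rfl


/-- Bridge: ennreal covers give `NullFor`. -/
lemma toNull (hm : ∀ ⦃A : Set X⦄, A ∈ P → 0 ≤ μ A) {N : Set X}
    (h : ∀ ε : ℝ, 0 < ε → ∃ B : ℕ → Set X, (∀ n, B n ∈ P) ∧ N ⊆ (⋃ n, B n) ∧
      ∑' n, ENNReal.ofReal (μ (B n)) < ENNReal.ofReal ε) : NullFor P μ N := by
  intro ε hε
  obtain ⟨B, hBP, hBN, hBs⟩ := h ε hε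
  have hne : ∑' n, ENNReal.ofReal (μ (B n)) ≠ ⊤ := hBs.ne_top
  have hsummable : Summable fun n => μ (B n) := by
    have := ENNReal.summable_toReal hne
    refine this.congr fun n => ?_
    exact ENNReal.toReal_ofReal (hm (hBP n))
  refine ⟨B, hBP, hBN, (∑' n, ENNReal.ofReal (μ (B n))).toReal, ?_, ?_⟩
  · have : (∑' n, ENNReal.ofReal (μ (B n))).toReal = ∑' n, μ (B n) := by
      rw [ENNReal.tsum_toReal_eq (fun n => ENNReal.ofReal_ne_top)]
      exact tsum_congr fun n => ENNReal.toReal_ofReal (hm (hBP n))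
    rw [this]
    exact hsummable.hasSum
  · exact (ENNReal.lt_ofReal_iff_toReal_lt hne).1 hBs

lemma fromNull (hm : ∀ ⦃A : Set X⦄, A ∈ P → 0 ≤ μ A) {N : Set X} (h : NullFor P μ N)
    (ε : ℝ) (hε : 0 < ε) : ∃ B : ℕ → Set X, (∀ n, B n ∈ P) ∧ N ⊆ (⋃ n, B n) ∧
      ∑' n, ENNReal.ofReal (μ (B n)) < ENNReal.ofReal ε := by
  obtain ⟨B, hBP, hBN, L, hL, hLε⟩ := h ε hε
  refine ⟨B, hBP, hBN, ?_⟩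
  have : ∑' n, ENNReal.ofReal (μ (B n)) = ENNReal.ofReal L := by
    rw [← hL.tsum_eq, ENNReal.ofReal_tsum_of_nonneg (fun n => hm (hBP n)) hL.summable]
  rw [this]
  exact (ENNReal.ofReal_lt_ofReal_iff hε).2 hLε

/-- Reindex an encodable cover to a `ℕ`-indexed cover. -/
lemma reindex {ι : Type*} [Encodable ι] (hP : IsSemiring P) (E : ι → Set X)
    (hE : ∀ i, E i ∈ P) (m : Set X → ℝ≥0∞) (hm : m ∅ = 0) :
    ∃ B : ℕ → Set X, (∀ n, B n ∈ P) ∧ (⋃ i, E i) ⊆ (⋃ n, B n) ∧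
      (∑' n, m (B n)) = ∑' i, m (E i) := by
  classical
  refine ⟨fun n => (Encodable.decode₂ ι n).elim ∅ E, ?_, ?_, ?_⟩
  · intro n
    cases h : Encodable.decode₂ ι n with
    | none => simpa [h] using hP.empty_mem
    | some i => simpa [h] using hE i
  · intro x hx
    obtain ⟨i, hi⟩ := Set.mem_iUnion.1 hx
    refine Set.mem_iUnion.2 ⟨Encodable.encode i, ?_⟩
    simp [Encodable.decode₂_encode]
    exact hi
  · have hsupp : Function.support (fun n => m ((Encodable.decode₂ ι n).elim ∅ E)) ⊆
        Set.range (Encodable.encode (α := ι)) := by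
      intro n hn
      cases h : Encodable.decode₂ ι n with
      | none => simp [Function.mem_support, h, hm] at hn
      | some i => exact ⟨i, Encodable.decode₂_eq_some.1 h⟩
    have h2 := Function.Injective.tsum_eq (g := Encodable.encode (α := ι))
      Encodable.encode_injective
      (f := fun n => m ((Encodable.decode₂ ι n).elim ∅ E)) hsupp
    rw [← h2]
    apply tsum_congr
    intro i
    simp [Encodable.decode₂_encode]

lemma binter_mem (hP : IsSemiring P) {A : ℕ → Set X} (S : Finset ℕ) (hS : S.Nonempty)
    (h : ∀ i ∈ S, A i ∈ P) : (⋂ i ∈ S, A i) ∈ P := by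
  classical
  induction hS using Finset.Nonempty.cons_induction with
  | singleton a => simpa using h a (by simp)
  | cons a S ha hS ih =>
    have : (⋂ i ∈ Finset.cons a S ha, A i) = A a ∩ ⋂ i ∈ S, A i := by
      simp [Finset.cons_eq_insert, Set.biInter_insert]
    rw [this]
    exact hP.inter_mem (h a (by simp)) (ih (fun i hi => h i (by simp [hi])))

open MeasureTheory in
open scoped Classical in
/-- Chebyshev-type covering lemma on a semiring. -/
lemma core (hP : IsSemiring P) (m : AddContent ℝ≥0∞ P)
    (A : ℕ → Set X) (hA : ∀ n, A n ∈ P) (w : ℕ → ℝ≥0∞) (s : ℝ≥0∞) :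
    ∃ E : (ℕ × Finset ℕ) × ℕ → Set X, (∀ q, E q ∈ P) ∧
      {x | ∃ N, s < ∑ n ∈ Finset.range N, (if x ∈ A n then w n else 0)} ⊆ (⋃ q, E q) ∧
      s * (∑' q, m (E q)) ≤ ∑' n, w n * m (A n) := by
  classical
  have hC : IsSetSemiring P := isSetSemiring hP
  set good : ℕ × Finset ℕ → Prop := fun p =>
    p.2 ⊆ Finset.range p.1 ∧ (s < ∑ i ∈ p.2, w i) ∧ (∑ i ∈ p.2 ∩ Finset.range (p.1 - 1), w i) ≤ s
    with hgood
  set base : ℕ × Finset ℕ → Set X := fun p => ⋂ i ∈ p.2, A i with hbasedef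
  set atom : ℕ × Finset ℕ → Set X := fun p =>
    base p \ ⋃ i ∈ Finset.range p.1 \ p.2, A i with hatomdef
  have hbase : ∀ p, good p → base p ∈ P := by
    intro p hp
    have hne : p.2.Nonempty := by
      rcases Finset.eq_empty_or_nonempty p.2 with h | h
      · exfalso
        have h21 := hp.2.1
        rw [h] at h21
        simpa using h21
      · exact h
    exact binter_mem hP p.2 hne (fun i _ => hA i)
  set J : ℕ × Finset ℕ → Finset (Set X) := fun p => (Finset.range p.1 \ p.2).image A with hJdef
  have hJP : ∀ p, ↑(J p) ⊆ P := by
    intro p u hu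
    simp only [hJdef, Finset.coe_image, Set.mem_image, Finset.mem_coe] at hu
    obtain ⟨i, _, rfl⟩ := hu
    exact hA i
  have hJU : ∀ p, ⋃₀ ↑(J p) = ⋃ i ∈ Finset.range p.1 \ p.2, A i := by
    intro p
    simp only [hJdef, Finset.coe_image, Set.sUnion_image]
    ext x; simp
  set K : ℕ × Finset ℕ → Finset (Set X) := fun p =>
    if h : good p then hC.disjointOfDiffUnion (hbase p h) (hJP p) else ∅ with hKdef
  have hKP : ∀ p, ↑(K p) ⊆ P := by
    intro p
    simp only [hKdef]
    split
    · exact hC.disjointOfDiffUnion_subset _ _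
    · simp
  have hKU : ∀ p, good p → ⋃₀ ↑(K p) = atom p := by
    intro p hp
    simp only [hKdef, dif_pos hp]
    rw [← hC.sdiff_sUnion_eq_sUnion_disjointOfDiffUnion (hbase p hp) (hJP p), hJU]
  have hKne : ∀ p, ∅ ∉ K p := by
    intro p
    simp only [hKdef]
    split
    · exact hC.empty_notMem_disjointOfDiffUnion _ _
    · simp
  have hKdis : ∀ p, Set.PairwiseDisjoint ↑(K p) (id : Set X → Set X) := by
    intro p
    simp only [hKdef]
    split
    · exact hC.pairwiseDisjoint_disjointOfDiffUnion _ _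
    · simp
  have hKsub : ∀ p, good p → ∀ t ∈ K p, t ⊆ atom p := by
    intro p hp t ht
    rw [← hKU p hp]
    exact Set.subset_sUnion_of_mem (by exact_mod_cast ht)
  have hbaseA : ∀ p, ∀ i ∈ p.2, base p ⊆ A i := by
    intro p i hi x hx
    simp only [hbasedef, Set.mem_iInter] at hx
    exact hx i hi
  -- characterization of membership in atoms
  have hmematom : ∀ p, good p → ∀ x ∈ atom p,
      p.2 = (Finset.range p.1).filter (fun i => x ∈ A i) := by
    intro p hp x hx
    obtain ⟨hx1, hx2⟩ := hx
    ext i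
    simp only [Finset.mem_filter, Finset.mem_range]
    constructor
    · intro hi
      refine ⟨Finset.mem_range.1 (hp.1 hi), ?_⟩
      simp only [hbasedef, Set.mem_iInter] at hx1
      exact hx1 i hi
    · rintro ⟨hilt, hiA⟩
      by_contra hiS
      exact hx2 (Set.mem_biUnion (Finset.mem_sdiff.2 ⟨Finset.mem_range.2 hilt, hiS⟩) hiA)
  -- disjointness of atoms
  have hatomdis : ∀ p p', good p → good p' → p ≠ p' → Disjoint (atom p) (atom p') := by
    have key : ∀ p p', good p → good p' → p.1 < p'.1 → ∀ x, x ∈ atom p → x ∈ atom p' → False := by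
      intro p p' hp hp' hlt x hxp hxp'
      have hSp := hmematom p hp x hxp
      have hSp' := hmematom p' hp' x hxp'
      have hsub : p.2 ⊆ p'.2 ∩ Finset.range (p'.1 - 1) := by
        intro i hi
        rw [hSp] at hi
        simp only [Finset.mem_filter, Finset.mem_range] at hi
        refine Finset.mem_inter.2 ⟨?_, Finset.mem_range.2 ?_⟩
        · rw [hSp']
          exact Finset.mem_filter.2 ⟨Finset.mem_range.2 (hi.1.trans hlt), hi.2⟩
        · exact hi.1.trans_le (Nat.le_sub_one_of_lt hlt)
      have : s < s := lt_of_lt_of_le (lt_of_lt_of_le hp.2.1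
        (Finset.sum_le_sum_of_subset hsub)) hp'.2.2
      exact lt_irrefl _ this
    intro p p' hp hp' hne
    rw [Set.disjoint_left]
    intro x hxp hxp'
    rcases lt_trichotomy p.1 p'.1 with h | h | h
    · exact key p p' hp hp' h x hxp hxp'
    · apply hne
      have h2 : p.2 = p'.2 := by
        rw [hmematom p hp x hxp, hmematom p' hp' x hxp', h]
      exact Prod.ext h h2
    · exact key p' p hp' hp h x hxp' hxp
  -- the covering family
  set E : (ℕ × Finset ℕ) × ℕ → Set X := fun q =>
    if h : q.2 < (K q.1).card then ((K q.1).equivFin.symm ⟨q.2, h⟩ : Set X) else ∅ with hEdef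
  have hEP : ∀ q, E q ∈ P := by
    intro q
    simp only [hEdef]
    split
    · exact hKP q.1 (by exact_mod_cast ((K q.1).equivFin.symm _).2)
    · exact hP.empty_mem
  refine ⟨E, hEP, ?_, ?_⟩
  · -- coverage
    intro x hx
    simp only [Set.mem_setOf_eq] at hx
    set N := Nat.find hx with hNdef
    have hN : s < ∑ n ∈ Finset.range N, (if x ∈ A n then w n else 0) := Nat.find_spec hx
    set S : Finset ℕ := (Finset.range N).filter (fun i => x ∈ A i) with hSdef
    have hsum : ∀ M : ℕ, ∑ i ∈ (Finset.range M).filter (fun i => x ∈ A i), w i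
        = ∑ n ∈ Finset.range M, (if x ∈ A n then w n else 0) := by
      intro M
      rw [Finset.sum_filter]
    have hgoodNS : good (N, S) := by
      refine ⟨Finset.filter_subset _ _, ?_, ?_⟩
      · rw [hsum]; exact hN
      · have hint : S ∩ Finset.range (N - 1) = (Finset.range (N - 1)).filter (fun i => x ∈ A i) := by
          ext i
          simp only [hSdef, Finset.mem_inter, Finset.mem_filter, Finset.mem_range]
          constructor
          · rintro ⟨⟨_, h2⟩, h3⟩; exact ⟨h3, h2⟩
          · rintro ⟨h1, h2⟩; exact ⟨⟨lt_of_lt_of_le h1 (Nat.sub_le N 1), h2⟩, h1⟩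
        rw [hint, hsum]
        rcases Nat.eq_zero_or_pos N with h0 | h0
        · simp [h0]
        · exact not_lt.1 (Nat.find_min hx (Nat.sub_lt h0 one_pos))
    have hxatom : x ∈ atom (N, S) := by
      constructor
      · simp only [hbasedef, Set.mem_iInter]
        intro i hi
        exact (Finset.mem_filter.1 hi).2
      · intro hmem
        obtain ⟨i, hi, hxi⟩ := Set.mem_iUnion₂.1 hmem
        obtain ⟨hi1, hi2⟩ := Finset.mem_sdiff.1 hi
        exact hi2 (Finset.mem_filter.2 ⟨hi1, hxi⟩)
    rw [← hKU (N, S) hgoodNS] at hxatom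
    obtain ⟨t, ht, hxt⟩ := hxatom
    rw [Finset.mem_coe] at ht
    set j := (K (N, S)).equivFin ⟨t, ht⟩ with hjdef
    refine Set.mem_iUnion.2 ⟨((N, S), j.1), ?_⟩
    have : E ((N, S), j.1) = t := by
      simp only [hEdef, dif_pos j.2]
      have : (⟨j.1, j.2⟩ : Fin (K (N, S)).card) = j := rfl
      rw [this, hjdef, Equiv.symm_apply_apply]
    rw [this]
    exact hxt
  · -- the sum bound
    set M : ℕ × Finset ℕ → ℝ≥0∞ := fun p => ∑ t ∈ K p, m t with hMdef
    have hMbad : ∀ p, ¬ good p → M p = 0 := by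
      intro p hp
      simp [hMdef, hKdef, dif_neg hp]
    have stepA : (∑' q, m (E q)) = ∑' p, M p := by
      have hprod : (∑' q : (ℕ × Finset ℕ) × ℕ, m (E q))
          = ∑' (p : ℕ × Finset ℕ), ∑' (j : ℕ), m (E (p, j)) := ENNReal.tsum_prod (f := fun p j => m (E (p, j)))
      rw [hprod]
      apply tsum_congr
      intro p
      have h1 : (∑' j : ℕ, m (E (p, j))) = ∑ j ∈ Finset.range (K p).card, m (E (p, j)) := by
        apply tsum_eq_sum
        intro j hj
        simp only [Finset.mem_range, not_lt] at hj
        simp only [hEdef, dif_neg (not_lt.2 hj)]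
        exact addContent_empty
      rw [h1, ← Fin.sum_univ_eq_sum_range (fun j => m (E (p, j))) (K p).card]
      have h2 : ∀ i : Fin (K p).card, m (E (p, i.1)) = m ((K p).equivFin.symm i : Set X) := by
        intro i
        simp only [hEdef, dif_pos i.2]
      rw [Finset.sum_congr rfl (fun i _ => h2 i)]
      rw [Equiv.sum_comp (K p).equivFin.symm (fun t : {u // u ∈ K p} => m t.1)]
      exact Finset.sum_coe_sort (K p) (fun t => m t)
    have stepB : s * (∑' p, M p) ≤ ∑' p, ∑ i ∈ p.2, w i * M p := by
      rw [← ENNReal.tsum_mul_left]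
      apply ENNReal.tsum_le_tsum
      intro p
      by_cases hp : good p
      · calc s * M p ≤ (∑ i ∈ p.2, w i) * M p :=
              mul_le_mul_left (le_of_lt hp.2.1) _
          _ = ∑ i ∈ p.2, w i * M p := Finset.sum_mul _ _ _
      · rw [hMbad p hp]
        simp
    have stepC : (∑' p, ∑ i ∈ p.2, w i * M p)
        = ∑' (i : ℕ), w i * ∑' p : ℕ × Finset ℕ, (if i ∈ p.2 then M p else 0) := by
      have h1 : ∀ p : ℕ × Finset ℕ, (∑ i ∈ p.2, w i * M p)
          = ∑' (i : ℕ), (if i ∈ p.2 then w i * M p else 0) := by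
        intro p
        rw [tsum_eq_sum (s := p.2) (fun i hi => if_neg hi)]
        exact (Finset.sum_congr rfl (fun i hi => (if_pos hi).symm))
      rw [tsum_congr h1, ENNReal.tsum_comm]
      apply tsum_congr
      intro i
      rw [← ENNReal.tsum_mul_left]
      apply tsum_congr
      intro p
      by_cases hi : i ∈ p.2 <;> simp [hi]
    have stepD : ∀ i : ℕ, (∑' p : ℕ × Finset ℕ, (if i ∈ p.2 then M p else 0)) ≤ m (A i) := by
      intro i
      rw [ENNReal.tsum_eq_iSup_sum]
      apply iSup_le
      intro F
      set F' := F.filter (fun p => i ∈ p.2 ∧ good p) with hF'def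
      have h1 : (∑ p ∈ F, (if i ∈ p.2 then M p else 0)) = ∑ p ∈ F', M p := by
        rw [hF'def]
        rw [Finset.sum_filter]
        apply Finset.sum_congr rfl
        intro p _
        by_cases hip : i ∈ p.2
        · by_cases hgp : good p
          · rw [if_pos hip, if_pos (⟨hip, hgp⟩ : i ∈ p.2 ∧ good p)]
          · rw [if_pos hip, if_neg (fun h : i ∈ p.2 ∧ good p => hgp h.2), hMbad p hgp]
        · rw [if_neg hip, if_neg (fun h : i ∈ p.2 ∧ good p => hip h.1)]
      rw [h1]
      have hgoodF' : ∀ p ∈ F', good p ∧ i ∈ p.2 := by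
        intro p hp
        have := Finset.mem_filter.1 hp
        exact ⟨this.2.2, this.2.1⟩
      have hKfindis : (↑F' : Set (ℕ × Finset ℕ)).PairwiseDisjoint K := by
        intro p hp p' hp' hne
        show Disjoint (K p) (K p')
        rw [Finset.disjoint_left]
        intro t htp htp'
        have h1 := hKsub p (hgoodF' p (by exact_mod_cast hp)).1 t htp
        have h2 := hKsub p' (hgoodF' p' (by exact_mod_cast hp')).1 t htp'
        have hd := hatomdis p p' (hgoodF' p (by exact_mod_cast hp)).1
          (hgoodF' p' (by exact_mod_cast hp')).1 hne
        have : t = ∅ := by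
          have := Set.disjoint_left.1 hd
          ext y
          simp only [Set.mem_empty_iff_false, iff_false]
          intro hy
          exact this (h1 hy) (h2 hy)
        rw [this] at htp
        exact hKne p htp
      simp only [hMdef]
      rw [← Finset.sum_biUnion hKfindis]
      set U := F'.biUnion K with hUdef
      apply sum_addContent_le_of_subset hC (I := U) ?_ ?_ (hA i) ?_
      · intro u hu
        rw [Finset.mem_coe, hUdef, Finset.mem_biUnion] at hu
        obtain ⟨p, _, hup⟩ := hu
        exact hKP p hup
      · intro u hu v hv huv
        rw [Finset.mem_coe, hUdef, Finset.mem_biUnion] at hu hv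
        obtain ⟨p, hpF, hup⟩ := hu
        obtain ⟨p', hp'F, hvp⟩ := hv
        by_cases hpp : p = p'
        · subst hpp
          exact hKdis p (by exact_mod_cast hup) (by exact_mod_cast hvp) huv
        · have h1 := hKsub p (hgoodF' p hpF).1 u hup
          have h2 := hKsub p' (hgoodF' p' hp'F).1 v hvp
          have hd := hatomdis p p' (hgoodF' p hpF).1 (hgoodF' p' hp'F).1 hpp
          exact Set.disjoint_of_subset h1 h2 hd
      · intro t ht
        rw [hUdef, Finset.mem_biUnion] at ht
        obtain ⟨p, hpF, htp⟩ := ht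
        have hgp := hgoodF' p hpF
        exact ((hKsub p hgp.1 t htp).trans Set.diff_subset).trans (hbaseA p i hgp.2)
    calc s * (∑' q, m (E q)) = s * ∑' p, M p := by rw [stepA]
      _ ≤ ∑' p, ∑ i ∈ p.2, w i * M p := stepB
      _ = ∑' (i : ℕ), w i * ∑' p : ℕ × Finset ℕ, (if i ∈ p.2 then M p else 0) := stepC
      _ ≤ ∑' (i : ℕ), w i * m (A i) := ENNReal.tsum_le_tsum
          (fun i => mul_le_mul_right (stepD i) _)

end SecNull

open scoped ENNReal in
open scoped Classical in
theorem SecNull.sections_aux {X Y : Type*} (P : Set (Set X)) (Q : Set (Set Y))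
    (μ : Set X → ℝ) (ν : Set Y → ℝ) (π : Set (X × Y) → ℝ)
    (hP : IsSemiring P) (hQ : IsSemiring Q)
    (hμ : IsPremeasure P μ) (hν : IsPremeasure Q ν)
    (hπ : ∀ A ∈ P, ∀ B ∈ Q, π (A ×ˢ B) = μ A * ν B)
    (E : Set (X × Y))
    (hE : NullFor (ProdSemiring P Q) π E) :
    NullFor P μ {x | ¬ NullFor Q ν {y | (x, y) ∈ E}} := by
  classical
  apply SecNull.toNull hμ.nonneg
  intro ε hε
  -- rectangle covers for each k
  have hδ : ∀ k : ℕ, (0:ℝ) < ε * (2⁻¹:ℝ)^(2*k+4) := fun k => by positivity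
  choose R hRP hRE L hLsum hLlt using fun k : ℕ => hE _ (hδ k)
  choose A hAP C hCQ hRec using hRP
  set w : ℕ → ℕ → ℝ≥0∞ := fun k n => ENNReal.ofReal (ν (C k n)) with hwdef
  set mP := SecNull.content hP hμ with hmPdef
  have hmP : ∀ a : Set X, mP a = ENNReal.ofReal (μ a) := fun a => rfl
  set sk : ℕ → ℝ≥0∞ := fun k => (2:ℝ≥0∞)⁻¹ ^ (k+2) with hskdef
  have hsk0 : ∀ k, sk k ≠ 0 := fun k => pow_ne_zero _ (by simp)
  have hskt : ∀ k, sk k ≠ ⊤ := fun k => ENNReal.pow_ne_top (by simp)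
  have h2inv : ENNReal.ofReal (2⁻¹:ℝ) = (2:ℝ≥0∞)⁻¹ := by
    rw [ENNReal.ofReal_inv_of_pos (by norm_num)]
    norm_num
  -- apply the covering lemma for each k
  choose Ek hEkP hEkcov hEksum using fun k =>
    SecNull.core hP mP (A k) (hAP k) (w k) (sk k)
  -- bound the sums
  have hsum : ∀ k, (∑' q, mP (Ek k q)) ≤ ENNReal.ofReal ε * sk k := by
    intro k
    have hπval : ∀ n, π (R k n) = μ (A k n) * ν (C k n) := by
      intro n
      rw [hRec k n, hπ _ (hAP k n) _ (hCQ k n)]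
    have hπnn : ∀ n, 0 ≤ π (R k n) := by
      intro n
      rw [hπval n]
      exact mul_nonneg (hμ.nonneg (hAP k n)) (hν.nonneg (hCQ k n))
    have hδ' : (∑' n, w k n * mP (A k n)) = ENNReal.ofReal (L k) := by
      rw [← (hLsum k).tsum_eq, ENNReal.ofReal_tsum_of_nonneg hπnn (hLsum k).summable]
      apply tsum_congr
      intro n
      rw [hπval n, hmP, hwdef, mul_comm, ← ENNReal.ofReal_mul (hμ.nonneg (hAP k n))]
    have hLbound : ENNReal.ofReal (L k) < ENNReal.ofReal ε * (sk k * sk k) := by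
      have h1 : ENNReal.ofReal (ε * (2⁻¹:ℝ)^(2*k+4))
          = ENNReal.ofReal ε * (sk k * sk k) := by
        rw [ENNReal.ofReal_mul (le_of_lt hε), ENNReal.ofReal_pow (by norm_num : (0:ℝ) ≤ 2⁻¹),
          h2inv, hskdef]
        congr 1
        rw [← pow_add]
        congr 1
        omega
      rw [← h1]
      exact (ENNReal.ofReal_lt_ofReal_iff (hδ k)).2 (hLlt k)
    have := (hEksum k).trans_lt (hδ'.symm ▸ hLbound)
    have h2 : sk k * (∑' q, mP (Ek k q)) ≤ sk k * (ENNReal.ofReal ε * sk k) := by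
      calc sk k * (∑' q, mP (Ek k q)) ≤ ENNReal.ofReal ε * (sk k * sk k) := le_of_lt this
        _ = sk k * (ENNReal.ofReal ε * sk k) := by ring
    exact (ENNReal.mul_le_mul_iff_right (hsk0 k) (hskt k)).1 h2
  -- the combined family
  set G : ℕ × ((ℕ × Finset ℕ) × ℕ) → Set X := fun r => Ek r.1 r.2 with hGdef
  have hGP : ∀ r, G r ∈ P := fun r => hEkP r.1 r.2
  have hGsum : (∑' r, mP (G r)) < ENNReal.ofReal ε := by
    have hprod : (∑' r : ℕ × ((ℕ × Finset ℕ) × ℕ), mP (G r))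
        = ∑' k, ∑' q, mP (Ek k q) := ENNReal.tsum_prod (f := fun k q => mP (Ek k q))
    rw [hprod]
    have h1 : (∑' k, ∑' q, mP (Ek k q)) ≤ ∑' k, ENNReal.ofReal ε * sk k :=
      ENNReal.tsum_le_tsum hsum
    have h2 : (∑' k, ENNReal.ofReal ε * sk k) = ENNReal.ofReal ε * 2⁻¹ := by
      rw [ENNReal.tsum_mul_left]
      congr 1
      have hs : ∀ k : ℕ, sk k = (2:ℝ≥0∞)⁻¹^2 * (2:ℝ≥0∞)⁻¹^k := by
        intro k
        show (2:ℝ≥0∞)⁻¹^(k+2) = (2:ℝ≥0∞)⁻¹^2 * (2:ℝ≥0∞)⁻¹^k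
        rw [← pow_add]; ring_nf
      rw [tsum_congr hs, ENNReal.tsum_mul_left, ENNReal.tsum_geometric,
        ENNReal.one_sub_inv_two, inv_inv, pow_two, mul_assoc,
        ENNReal.inv_mul_cancel (by norm_num) (by norm_num), mul_one]
    calc (∑' k, ∑' q, mP (Ek k q)) ≤ ENNReal.ofReal ε * 2⁻¹ := h1.trans_eq h2
      _ < ENNReal.ofReal ε := by
        have h := ENNReal.half_lt_self (a := ENNReal.ofReal ε)
          (by simpa using hε) ENNReal.ofReal_ne_top
        rw [ENNReal.div_eq_inv_mul] at h
        rw [mul_comm]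
        exact h
  -- coverage
  have hcov : {x | ¬ NullFor Q ν {y | (x, y) ∈ E}} ⊆ ⋃ r, G r := by
    intro x hx
    by_contra hnot
    apply hx
    have hDk : ∀ k, ¬ ∃ N, sk k < ∑ n ∈ Finset.range N, (if x ∈ A k n then w k n else 0) := by
      intro k hex
      have := hEkcov k hex
      obtain ⟨q, hq⟩ := Set.mem_iUnion.1 this
      exact hnot (Set.mem_iUnion.2 ⟨(k, q), hq⟩)
    have hfk : ∀ k, (∑' n, (if x ∈ A k n then w k n else 0)) ≤ sk k := by
      intro k
      rw [ENNReal.tsum_eq_iSup_nat]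
      apply iSup_le
      intro N
      by_contra h
      exact hDk k ⟨N, not_le.1 h⟩
    apply SecNull.toNull hν.nonneg
    intro η hη
    obtain ⟨j, hj⟩ := ENNReal.exists_inv_two_pow_lt
      (a := ENNReal.ofReal η) (by simpa using hη)
    have hskj : sk j < ENNReal.ofReal η := by
      refine lt_of_le_of_lt ?_ hj
      show (2:ℝ≥0∞)⁻¹ ^ (j+2) ≤ 2⁻¹ ^ j
      exact pow_le_pow_of_le_one zero_le (by simp [ENNReal.inv_le_one]) (by omega)
    set B : ℕ → Set Y := fun n => if x ∈ A j n then C j n else ∅ with hBdef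
    refine ⟨B, ?_, ?_, ?_⟩
    · intro n
      by_cases h : x ∈ A j n
      · simpa [hBdef, h] using hCQ j n
      · simpa [hBdef, h] using hQ.empty_mem
    · intro y hy
      obtain ⟨n, hn⟩ := Set.mem_iUnion.1 (hRE j hy)
      rw [hRec j n] at hn
      obtain ⟨hn1, hn2⟩ := hn
      refine Set.mem_iUnion.2 ⟨n, ?_⟩
      simp only [hBdef, if_pos hn1]
      exact hn2
    · have heq : (∑' n, ENNReal.ofReal (ν (B n))) = ∑' n, (if x ∈ A j n then w j n else 0) := by
        apply tsum_congr
        intro n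
        by_cases h : x ∈ A j n
        · simp [hBdef, hwdef, h]
        · simp [hBdef, hwdef, h, hν.empty]
      rw [heq]
      exact lt_of_le_of_lt (hfk j) hskj
  -- reindex to ℕ
  obtain ⟨B, hBP, hBcov, hBsum⟩ := SecNull.reindex hP G hGP
    (fun a => ENNReal.ofReal (μ a)) (by simp [hμ.empty])
  refine ⟨B, hBP, hcov.trans hBcov, ?_⟩
  rw [hBsum]
  exact hGsum

/-- Sections of null sets (Lemma C): if `E ⊆ X × Y` is a null set for the
product measure, then for almost every `x` the section
`{y | (x, y) ∈ E}` is a null set in `Y`. -/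
theorem sections_of_null_sets {X Y : Type*} (P : Set (Set X)) (Q : Set (Set Y))
    (μ : Set X → ℝ) (ν : Set Y → ℝ) (π : Set (X × Y) → ℝ)
    (hP : IsSemiring P) (hQ : IsSemiring Q)
    (hμ : IsPremeasure P μ) (hν : IsPremeasure Q ν)
    (hπ : ∀ A ∈ P, ∀ B ∈ Q, π (A ×ˢ B) = μ A * ν B)
    (E : Set (X × Y)) (hE : NullFor (ProdSemiring P Q) π E) :
    NullFor P μ {x | ¬ NullFor Q ν {y | (x, y) ∈ E}} := by
  exact SecNull.sections_aux P Q μ ν π hP hQ hμ hν hπ E hE
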